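/- arXiv:2208.12581 — 2 statements merged into one kernel-verified Lean document; each statement's English description precedes it below -/
import Mathlib

section
/- If G is a finite non-solvable group all of whose maximal subgroups are solvable, then G/Φ(G) is a minimal simple group, i.e., a non-abelian simple group all of whose proper subgroups are solvable. -/
/-- A group is *supersolvable* if it has a chain of subgroups
`⊥ = G₀ ≤ G₁ ≤ ⋯ ≤ Gₙ = ⊤`, each normal in the whole group, with each successive
factor `G_{i+1}/G_i` cyclic (equivalently, `G_{i+1} = G_i ⊔ ⟨g⟩` for some `g`). -/
def IsSupersolvable (G : Type*) [Group G] : Prop :=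
  ∃ (n : ℕ) (s : Fin (n + 1) → Subgroup G),
    s 0 = ⊥ ∧ s (Fin.last n) = ⊤ ∧
    (∀ i, (s i).Normal) ∧
    ∀ i : Fin n, ∃ g : G, s i.castSucc ⊔ Subgroup.zpowers g = s i.succ

/-- A subgroup of a solvable subgroup is solvable. -/
private lemma solv_of_le {G : Type*} [Group G] {H K : Subgroup G} (h : H ≤ K)
    (hK : IsSolvable K) : IsSolvable H := by
  haveI : Group.IsSolvable K := hK
  exact solvable_of_surjective (f := (Subgroup.subgroupOfEquivOfLe h).toMonoidHom)
    (Subgroup.subgroupOfEquivOfLe h).surjective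

/-- Solvability is closed under extensions. -/
private lemma solv_ext {G : Type*} [Group G] (K : Subgroup G) [K.Normal]
    (h1 : IsSolvable K) (h2 : IsSolvable (G ⧸ K)) : IsSolvable G := by
  haveI : Group.IsSolvable K := h1; haveI : Group.IsSolvable (G ⧸ K) := h2
  exact solvable_of_ker_le_range K.subtype (QuotientGroup.mk' K)
    (by rw [QuotientGroup.ker_mk', Subgroup.range_subtype])

theorem quotient_frattini_minimal_simple {G : Type*} [Group G] [Finite G]
    (hns : ¬ IsSolvable G)
    (hmax : ∀ M : Subgroup G, IsCoatom M → IsSolvable M) :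
    IsSimpleGroup (G ⧸ frattini G) ∧
      (∃ a b : G ⧸ frattini G, a * b ≠ b * a) ∧
      ∀ H : Subgroup (G ⧸ frattini G), H ≠ ⊤ → IsSolvable H := by
  -- every proper subgroup of `G` is solvable
  have hproper : ∀ K : Subgroup G, K ≠ ⊤ → IsSolvable K := by
    intro K hK
    obtain ⟨M, hM, hKM⟩ := (eq_top_or_exists_le_coatom K).resolve_left hK
    exact solv_of_le hKM (hmax M hM)
  -- the Frattini subgroup is proper
  have hΦ_ne_top : frattini G ≠ ⊤ := by
    intro h
    rcases eq_top_or_exists_le_coatom (⊥ : Subgroup G) with hb | ⟨M, hM, -⟩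
    · exact hns (isSolvable_of_top_eq_bot G hb.symm)
    · exact hM.1 (top_le_iff.mp (h ▸ frattini_le_coatom hM))
  -- key step: a proper normal subgroup of `G` is contained in the Frattini subgroup
  have hkey : ∀ K : Subgroup G, K.Normal → K ≠ ⊤ → K ≤ frattini G := by
    intro K hKnorm hKtop
    by_contra hKΦ
    -- find a maximal subgroup not containing `K`
    have : ¬ ∀ M : Subgroup G, IsCoatom M → K ≤ M := by
      intro hall
      exact hKΦ (le_iInf₂ hall)
    push_neg at this
    obtain ⟨M, hM, hKM⟩ := this
    -- then `M ⊔ K = ⊤`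
    have hsup : M ⊔ K = ⊤ := hM.2 _ (left_lt_sup.mpr hKM)
    -- the map `M → G ⧸ K` is surjective
    haveI := hKnorm
    have hsurj : Function.Surjective ((QuotientGroup.mk' K).comp M.subtype) := by
      intro x
      obtain ⟨g, rfl⟩ := QuotientGroup.mk'_surjective K x
      have hg : g ∈ (↑(M ⊔ K) : Set G) := by rw [hsup]; trivial
      rw [Subgroup.mul_normal] at hg
      obtain ⟨m, hm, k, hk, rfl⟩ := hg
      refine ⟨⟨m, hm⟩, ?_⟩
      simp only [MonoidHom.comp_apply, Subgroup.coe_subtype, QuotientGroup.mk'_apply]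
      rw [QuotientGroup.mk_mul, (QuotientGroup.eq_one_iff k).mpr hk, mul_one]
    haveI : Group.IsSolvable M := hmax M hM
    have hq : IsSolvable (G ⧸ K) := solvable_of_surjective hsurj
    exact hns (solv_ext K (hproper K hKtop) hq)
  set π := QuotientGroup.mk' (frattini G) with hπ
  have hπs : Function.Surjective π := QuotientGroup.mk'_surjective _
  -- nontriviality of the quotient
  haveI hnt : Nontrivial (G ⧸ frattini G) := by
    obtain ⟨g, hg⟩ : ∃ g : G, g ∉ frattini G := by
      by_contra h
      push_neg at h
      exact hΦ_ne_top (Subgroup.eq_top_iff' _ |>.mpr h)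
    exact ⟨⟨(g : G ⧸ frattini G), 1, by
      rw [Ne, QuotientGroup.eq_one_iff]; exact hg⟩⟩
  -- solvability transfer through the quotient
  have hlift : IsSolvable (G ⧸ frattini G) → False := by
    intro h
    exact hns (solv_ext (frattini G) (hproper _ hΦ_ne_top) h)
  refine ⟨⟨fun N hN => ?_⟩, ?_, ?_⟩
  · -- simplicity
    have hmc := Subgroup.map_comap_eq_self_of_surjective hπs N
    by_cases hKt : N.comap π = ⊤
    · right
      rw [← hmc, hKt, Subgroup.map_top_of_surjective _ hπs]
    · left
      haveI : (N.comap π).Normal := hN.comap π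
      have h1 : N.comap π ≤ frattini G := hkey _ this hKt
      rw [← hmc]
      exact (Subgroup.map_eq_bot_iff _).mpr (h1.trans (QuotientGroup.ker_mk' _).symm.le)
  · -- non-abelian
    by_contra h
    push_neg at h
    exact hlift (isSolvable_of_comm fun a b => (h a b).symm ▸ rfl)
  · -- proper subgroups are solvable
    intro H hH
    have hKt : H.comap π ≠ ⊤ := by
      intro h
      apply hH
      rw [← Subgroup.map_comap_eq_self_of_surjective hπs H, h,
        Subgroup.map_top_of_surjective _ hπs]
    haveI : Group.IsSolvable (H.comap π) := hproper _ hKt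
    have : IsSolvable ((H.comap π).map π) :=
      solvable_of_surjective (π.subgroupMap_surjective (H.comap π))
    rwa [Subgroup.map_comap_eq_self_of_surjective hπs H] at this
end

section
/- If G is a finite group with Φ(G) = 1 such that every maximal subgroup of G is solvable and every minimal normal subgroup of G is solvable, then G is solvable. -/
theorem solvable_of_frattini_trivial {G : Type*} [Group G] [Finite G]
    (hfr : frattini G = ⊥)
    (hmax : ∀ M : Subgroup G, IsCoatom M → IsSolvable M)
    (hmin : ∀ N : Subgroup G, N.Normal → N ≠ ⊥ →
      (∀ K : Subgroup G, K.Normal → K ≠ ⊥ → K ≤ N → K = N) → IsSolvable N) :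
    IsSolvable G := by
  rcases subsingleton_or_nontrivial G with h | h
  · exact (inferInstance : Group.IsSolvable G)
  -- pick a minimal nontrivial normal subgroup
  have : WellFoundedLT (Subgroup G) := Finite.to_wellFoundedLT
  obtain ⟨N, ⟨hNnorm, hNbot⟩, hNmin⟩ :=
    (IsWellFounded.wf (r := ((· < ·) : Subgroup G → Subgroup G → Prop))).has_min
      {N : Subgroup G | N.Normal ∧ N ≠ ⊥} ⟨⊤, inferInstance, by simp⟩
  have hNsolv : IsSolvable N := by
    refine hmin N hNnorm hNbot fun K hK1 hK2 hK3 => ?_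
    rcases eq_or_lt_of_le hK3 with h | h
    · exact h
    · exact absurd h (hNmin K ⟨hK1, hK2⟩)
  -- find a maximal subgroup not containing N
  have hex : ∃ M : Subgroup G, IsCoatom M ∧ ¬ N ≤ M := by
    by_contra hc
    push_neg at hc
    have : N ≤ frattini G := by
      refine le_iInf fun M => le_iInf fun hM => hc M hM
    rw [hfr, le_bot_iff] at this
    exact hNbot this
  obtain ⟨M, hMco, hNM⟩ := hex
  have hMsolv : IsSolvable M := hmax M hMco
  have hsup : M ⊔ N = ⊤ := hMco.2 _ (left_lt_sup.mpr hNM)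
  -- G/N is a quotient of M
  haveI : N.Normal := hNnorm
  have hsurj : Function.Surjective ((QuotientGroup.mk' N).comp M.subtype) := by
    intro x
    obtain ⟨g, rfl⟩ := QuotientGroup.mk'_surjective N x
    have : g ∈ (↑(M ⊔ N) : Set G) := by rw [hsup]; trivial
    rw [Subgroup.mul_normal] at this
    obtain ⟨m, hm, n, hn, rfl⟩ := this
    refine ⟨⟨m, hm⟩, ?_⟩
    simp only [MonoidHom.comp_apply, Subgroup.coe_subtype, QuotientGroup.mk'_apply]
    rw [QuotientGroup.eq]
    simpa using hn
  haveI : Group.IsSolvable M := hMsolv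
  haveI : Group.IsSolvable N := hNsolv
  haveI : Group.IsSolvable (G ⧸ N) := solvable_of_surjective hsurj
  refine solvable_of_ker_le_range N.subtype (QuotientGroup.mk' N) ?_
  rw [QuotientGroup.ker_mk', Subgroup.range_subtype]
end
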